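/- Let Δ ≥ 0 be a real number and let (e_L, e_H) and (f_L, f_H) be two pairs of real utilities. If u_Δ(f_L, f_H) ≥ u_Δ(e_L, e_H), then (e_L + e_H) − (f_L + f_H) ≤ 2Δ. (Two-class efficiency-loss bound for the hybrid-lexicographic rule applied to kidney exchange.) -/

import Mathlib

/-- Two-class hybrid-lexicographic utility: `x + y − Δ` if `x − y > Δ`,
`2y` if `|x − y| ≤ Δ`, and `x + y + Δ` if `y − x > Δ`. -/
noncomputable def uD (Δ : ℝ) (x y : ℝ) : ℝ :=
  if x - y > Δ then x + y - Δ
  else if |x - y| ≤ Δ then 2 * y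
  else x + y + Δ

/-- Two-class efficiency-loss bound for the hybrid-lexicographic rule:
if `u_Δ(f_L, f_H) ≥ u_Δ(e_L, e_H)` then `(e_L + e_H) − (f_L + f_H) ≤ 2Δ`. -/
theorem two_class_hybrid_efficiency_loss (Δ : ℝ) (hΔ : 0 ≤ Δ)
    (eL eH fL fH : ℝ) (h : uD Δ fL fH ≥ uD Δ eL eH) :
    (eL + eH) - (fL + fH) ≤ 2 * Δ := by
  unfold uD at h
  split_ifs at h with h1 h2 h3 h4 h3 h4 h5 h6 <;>
    simp -failIfUnchanged only [abs_le, not_le, not_lt] at * <;>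
    linarith
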